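/- Let r_j, r_k, s ∈ V be lightlike, pairwise linearly independent, with ⟨r_j, r_k⟩ ≠ 0 and ⟨s, r_k⟩ ≠ 0. Let n_α := r_j − r_k and n_β := r_j − λ_β r_k with λ_β ≠ 0, and assume ⟨n_α,n_α⟩ ≠ 0, ⟨n_β,n_β⟩ ≠ 0. If σ_{n_α}(s) and σ_{n_β}(s) are linearly dependent (span the same line), then λ_β = 1, i.e., n_α = n_β. -/

import Mathlib

/-- The bilinear form of signature (4,2) on ℝ⁶ (ℝ^{4,2}). -/
noncomputable def B (x y : Fin 6 → ℝ) : ℝ :=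
  -(x 0 * y 0) + x 1 * y 1 + x 2 * y 2 + x 3 * y 3 + x 4 * y 4 - x 5 * y 5

/-- The Lie inversion with respect to the linear sphere complex determined by `a`. -/
noncomputable def lieInv (a x : Fin 6 → ℝ) : Fin 6 → ℝ :=
  x - (2 * B x a / B a a) • a

lemma B_symm (x y : Fin 6 → ℝ) : B x y = B y x := by simp [B]; ring

lemma B_sub_left (x y z : Fin 6 → ℝ) : B (x - y) z = B x z - B y z := by
  simp [B, Pi.sub_apply]; ring

lemma B_sub_right (x y z : Fin 6 → ℝ) : B x (y - z) = B x y - B x z := by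
  simp [B, Pi.sub_apply]; ring

lemma B_smul_left (a : ℝ) (x y : Fin 6 → ℝ) : B (a • x) y = a * B x y := by
  simp [B, Pi.smul_apply, smul_eq_mul]; ring

lemma B_smul_right (a : ℝ) (x y : Fin 6 → ℝ) : B x (a • y) = a * B x y := by
  simp [B, Pi.smul_apply, smul_eq_mul]; ring

theorem inversion_family_rigidity (rj rk s : Fin 6 → ℝ)
    (hj : B rj rj = 0) (hk : B rk rk = 0) (hs : B s s = 0)
    (hind : LinearIndependent ℝ ![rj, rk, s])
    (hjk : B rj rk ≠ 0) (hsk : B s rk ≠ 0)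
    (lamb : ℝ) (hlamb : lamb ≠ 0)
    (hna : B (rj - rk) (rj - rk) ≠ 0)
    (hnb : B (rj - lamb • rk) (rj - lamb • rk) ≠ 0)
    (hdep : ∃ c : ℝ, lieInv (rj - lamb • rk) s = c • lieInv (rj - rk) s) :
    lamb = 1 := by
  obtain ⟨c, hc⟩ := hdep
  set m := B rj rk with hm
  set p := B s rj with hp
  set q := B s rk with hq
  have hBa : B (rj - rk) (rj - rk) = -2 * m := by
    rw [B_sub_left, B_sub_right, B_sub_right, hj, hk, B_symm rk rj]; ring
  have hBb : B (rj - lamb • rk) (rj - lamb • rk) = -2 * lamb * m := by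
    simp only [B_sub_left, B_sub_right, B_smul_left, B_smul_right, hj, hk, B_symm rk rj]; ring
  have hsa : B s (rj - rk) = p - q := by rw [B_sub_right]
  have hsb : B s (rj - lamb • rk) = p - lamb * q := by rw [B_sub_right, B_smul_right]
  set A1 := 2 * B s (rj - lamb • rk) / B (rj - lamb • rk) (rj - lamb • rk) with hA1
  set A2 := 2 * B s (rj - rk) / B (rj - rk) (rj - rk) with hA2
  have hc' : s - A1 • (rj - lamb • rk) = c • (s - A2 • (rj - rk)) := hc
  have hz : (c * A2 - A1) • rj + (A1 * lamb - c * A2) • rk + (1 - c) • s = 0 := by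
    funext i
    have h := congrFun hc' i
    simp only [Pi.add_apply, Pi.sub_apply, Pi.smul_apply, smul_eq_mul, Pi.zero_apply] at h ⊢
    linear_combination h
  have key := Fintype.linearIndependent_iff.mp hind
    ![c * A2 - A1, A1 * lamb - c * A2, 1 - c] (by
      rw [Fin.sum_univ_three]
      simpa using hz)
  have hc1 : c = 1 := by
    have := key 2
    simp at this
    linarith
  have hcoef : A1 * lamb - c * A2 = 0 := by simpa using key 1
  rw [hc1] at hcoef
  rw [hA1, hA2, hBa, hBb, hsa, hsb] at hcoef
  have hmne : m ≠ 0 := hjk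
  field_simp at hcoef
  -- derive lamb * q = q
  have h2 : lamb * m * ((lamb - 1) * q) = 0 := by linear_combination (lamb * m) * hcoef
  rcases mul_eq_zero.mp h2 with h | h
  · rcases mul_eq_zero.mp h with h' | h'
    · exact absurd h' hlamb
    · exact absurd h' hmne
  · rcases mul_eq_zero.mp h with h' | h'
    · linarith
    · exact absurd h' hsk
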